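/- Key Gamma identity and failure of first-order identifiability (Proposition 5.1): For the Gamma density f(x|a,b) = (b^a/Γ(a)) x^{a−1} e^{−bx} for x > 0 (and f = 0 for x ≤ 0), with shape a > 0 and rate b > 0, the identity ∂f/∂b(x|a,b) = (a/b)·f(x|a,b) − (a/b)·f(x|a+1,b) holds for every x > 0. Consequently, the Gamma family is not identifiable in the first order: for any a > 1 and b > 0, the two distinct parameter pairs (a,b) and (a−1,b) admit real coefficients, not all zero — namely β₁ = β₂ = γ₁ = 0, any γ₂ ≠ 0, α₁ = γ₂(a−1)/b, α₂ = −γ₂(a−1)/b — such that α₁ f(x|a,b) + β₁ ∂f/∂a(x|a,b) + γ₁ ∂f/∂b(x|a,b) + α₂ f(x|a−1,b) + β₂ ∂f/∂a(x|a−1,b) + γ₂ ∂f/∂b(x|a−1,b) = 0 for every x > 0. -/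

import Mathlib

open MeasureTheory

noncomputable section

/-- The Gamma density with shape `a` and rate `b`:
`f(x|a,b) = (b^a/Γ(a)) x^{a−1} e^{−bx}` for `x > 0`, and `0` otherwise. -/
def gammaDensity (a b x : ℝ) : ℝ :=
  if 0 < x then b ^ a / Real.Gamma a * x ^ (a - 1) * Real.exp (-(b * x)) else 0

/-- First-order identifiability (the linear-independence condition) for the Gamma
family on the parameter domain `(0,∞)²`, with respect to Lebesgue measure on
`(0,∞)`. -/
def GammaFirstOrderIdent : Prop :=
  ∀ (k : ℕ) (φ : Fin k → ℝ × ℝ), (∀ i, 0 < (φ i).1 ∧ 0 < (φ i).2) →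
    Function.Injective φ →
    ∀ α β γ : Fin k → ℝ,
      (∀ᵐ x ∂(volume.restrict (Set.Ioi (0 : ℝ))),
        ∑ i, (α i * gammaDensity (φ i).1 (φ i).2 x
          + β i * deriv (fun s => gammaDensity s (φ i).2 x) (φ i).1
          + γ i * deriv (fun s => gammaDensity (φ i).1 s x) (φ i).2) = 0) →
      ∀ i, α i = 0 ∧ β i = 0 ∧ γ i = 0


lemma gamma_deriv (a b : ℝ) (ha : 0 < a) (hb : 0 < b) (x : ℝ) (hx : 0 < x) :
    deriv (fun s => gammaDensity a s x) b
      = a / b * gammaDensity a b x - a / b * gammaDensity (a + 1) b x := by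
  have hfun : (fun s => gammaDensity a s x)
      = fun s => s ^ a / Real.Gamma a * x ^ (a - 1) * Real.exp (-(s * x)) := by
    funext s; simp [gammaDensity, hx]
  have h1 : HasDerivAt (fun s : ℝ => s ^ a) (a * b ^ (a - 1)) b :=
    Real.hasDerivAt_rpow_const (Or.inl hb.ne')
  have h2 : HasDerivAt (fun s : ℝ => Real.exp (-(s * x)))
      (-x * Real.exp (-(b * x))) b := by
    have : HasDerivAt (fun s : ℝ => -(s * x)) (-x) b := by
      have h0 := ((hasDerivAt_id b).mul_const x).neg
      simp only [id, one_mul] at h0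
      exact h0
    simpa [mul_comm] using this.exp
  have h3 : HasDerivAt (fun s => s ^ a / Real.Gamma a * x ^ (a - 1) * Real.exp (-(s * x)))
      ((a * b ^ (a - 1) / Real.Gamma a * x ^ (a - 1)) * Real.exp (-(b * x))
        + (b ^ a / Real.Gamma a * x ^ (a - 1)) * (-x * Real.exp (-(b * x)))) b :=
    ((h1.div_const (Real.Gamma a)).mul_const (x ^ (a - 1))).mul h2
  rw [hfun, h3.deriv]
  have hΓ : Real.Gamma a ≠ 0 := (Real.Gamma_pos_of_pos ha).ne'
  simp only [gammaDensity, if_pos hx]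
  rw [Real.Gamma_add_one ha.ne']
  have hba : b ^ a = b ^ (a - 1) * b := by
    rw [← Real.rpow_add_one hb.ne']; ring_nf
  have hba1 : b ^ (a + 1) = b ^ (a - 1) * b * b := by
    rw [← Real.rpow_add_one hb.ne', ← Real.rpow_add_one hb.ne']; ring_nf
  have hxa : x ^ (a + 1 - 1) = x ^ (a - 1) * x := by
    rw [← Real.rpow_add_one hx.ne']; ring_nf
  rw [hba, hba1, hxa]
  field_simp
  ring

lemma gamma_combo (a b : ℝ) (ha : 1 < a) (hb : 0 < b) (γ₂ : ℝ) (x : ℝ) (hx : 0 < x) :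
    γ₂ * (a - 1) / b * gammaDensity a b x
      + (-(γ₂ * (a - 1) / b)) * gammaDensity (a - 1) b x
      + γ₂ * deriv (fun s => gammaDensity (a - 1) s x) b = 0 := by
  have hd := gamma_deriv (a - 1) b (by linarith) hb x hx
  rw [show a - 1 + 1 = a by ring] at hd
  rw [hd]
  field_simp
  ring

/-- **Proposition 5.1** (key Gamma identity and failure of first-order
identifiability): `∂f/∂b(x|a,b) = (a/b) f(x|a,b) − (a/b) f(x|a+1,b)` for all
`x > 0`; consequently, for any `a > 1`, `b > 0` and `γ₂ ≠ 0`, the coefficients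
`α₁ = γ₂(a−1)/b`, `α₂ = −γ₂(a−1)/b` (and `β₁ = β₂ = γ₁ = 0`) produce a vanishing
linear combination at the two distinct parameter pairs `(a,b)` and `(a−1,b)`,
so the Gamma family is not identifiable in the first order. -/
theorem gamma_identity_and_not_first_order_identifiable :
    (∀ a b : ℝ, 0 < a → 0 < b → ∀ x : ℝ, 0 < x →
      deriv (fun s => gammaDensity a s x) b
        = a / b * gammaDensity a b x - a / b * gammaDensity (a + 1) b x) ∧
    (∀ a b : ℝ, 1 < a → 0 < b → ∀ γ₂ : ℝ, γ₂ ≠ 0 → ∀ x : ℝ, 0 < x →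
      γ₂ * (a - 1) / b * gammaDensity a b x
        + (-(γ₂ * (a - 1) / b)) * gammaDensity (a - 1) b x
        + γ₂ * deriv (fun s => gammaDensity (a - 1) s x) b = 0) ∧
    ¬ GammaFirstOrderIdent := by

  refine ⟨fun a b ha hb x hx => gamma_deriv a b ha hb x hx,
    fun a b ha hb γ₂ _ x hx => gamma_combo a b ha hb γ₂ x hx, ?_⟩
  intro H
  have key := H 2 ![(2, 1), (1, 1)]
    (by intro i; fin_cases i <;> norm_num)
    (by
      intro i j hij
      fin_cases i <;> fin_cases j <;> simp_all <;>
        exact absurd (congrArg Prod.fst hij) (by norm_num))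
    ![1, -1] 0 ![0, 1]
    (by
      refine (ae_restrict_iff' measurableSet_Ioi).mpr (ae_of_all _ ?_)
      intro x hx
      have h := gamma_combo 2 1 (by norm_num) (by norm_num) 1 x hx
      norm_num at h
      simp [Fin.sum_univ_two]
      linarith)
  have := (key 1).2.2
  simp at this
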